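/- arXiv:0910.2062 — 3 statements merged into one kernel-verified Lean document; each statement's English description precedes it below -/
import Mathlib

section
/- The sequences α_L = (-1)^L q^{L(3L+1)/2} (1 - q^{2L+1})/(1 - q) and β_L = 1/(q;q)_L form a Bailey pair relative to a = q; that is, for all L ≥ 0, 1/(q;q)_L = Σ_{r=0}^L α_r / ((q;q)_{L-r} (q²;q)_{L+r}). -/
/-- Finite q-shifted factorial `(x;q)_n`. -/
noncomputable def qp (q x : ℂ) (n : ℕ) : ℂ := ∏ k ∈ Finset.range n, (1 - x * q ^ k)

lemma one_sub_pow_ne {q : ℂ} (hq1 : ‖q‖ < 1) (k : ℕ) : 1 - q ^ (k+1) ≠ 0 := by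
  have h : ‖q ^ (k+1)‖ < 1 := by
    rw [norm_pow]
    exact pow_lt_one₀ (norm_nonneg q) hq1 (Nat.succ_ne_zero k)
  intro h0
  have : q ^ (k+1) = 1 := by linear_combination -h0
  rw [this] at h; simp at h

lemma qp_succ (q : ℂ) (n : ℕ) : qp q q (n+1) = qp q q n * (1 - q ^ (n+1)) := by
  rw [qp, Finset.prod_range_succ, ← qp]; ring_nf

lemma qp_ne {q : ℂ} (hq1 : ‖q‖ < 1) (n : ℕ) : qp q q n ≠ 0 := by
  induction n with
  | zero => simp [qp]
  | succ n ih => rw [qp_succ]; exact mul_ne_zero ih (one_sub_pow_ne hq1 n)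

lemma qp_sq (q : ℂ) (n : ℕ) : qp q q (n+1) = qp q (q^2) n * (1 - q) := by
  simp only [qp]
  rw [Finset.prod_range_succ']
  simp only [pow_zero, mul_one]
  congr 1
  exact Finset.prod_congr rfl (fun k _ => by ring_nf)

noncomputable def bpT (q : ℂ) (L r : ℕ) : ℂ :=
  ((-1)^r * q^(r*(3*r+1)/2) * (1 - q^(2*r+1))) / (qp q q (L-r) * qp q q (L+r+1))

noncomputable def bpG (q : ℂ) (L r : ℕ) : ℂ :=
  -((-1)^r * q^(r*(3*r+1)/2 + (L+1-r)) * (1 - q^r) / (qp q q (L+1-r) * qp q q (L+r+1)))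

lemma bp_key (q A B e u v s : ℂ) (hA : A ≠ 0) (hB : B ≠ 0)
    (h1 : 1 - v*q ≠ 0) (h2 : 1 - u^2*v*q^2 ≠ 0) :
    (1 - u*v*q) * (s*e*(1-u^2*q) / ((A*(1-v*q)) * (B*(1-u^2*v*q^2)))) =
    s*e*(1-u^2*q)/(A*B)
      + s*e*u^3*q^2*v*(1-u*q)/(A*(B*(1-u^2*v*q^2)))
      + s*e*v*q*(1-u)/((A*(1-v*q))*B) := by
  have hD1 : (A*(1-v*q)) * (B*(1-u^2*v*q^2)) ≠ 0 :=
    mul_ne_zero (mul_ne_zero hA h1) (mul_ne_zero hB h2)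
  have e2 : s*e*(1-u^2*q)/(A*B)
      = (s*e*(1-u^2*q)*((1-v*q)*(1-u^2*v*q^2)))/((A*(1-v*q)) * (B*(1-u^2*v*q^2))) := by
    rw [div_eq_div_iff (mul_ne_zero hA hB) hD1]; ring
  have e3 : s*e*u^3*q^2*v*(1-u*q)/(A*(B*(1-u^2*v*q^2)))
      = (s*e*u^3*q^2*v*(1-u*q)*(1-v*q))/((A*(1-v*q)) * (B*(1-u^2*v*q^2))) := by
    rw [div_eq_div_iff (mul_ne_zero hA (mul_ne_zero hB h2)) hD1]; ring
  have e4 : s*e*v*q*(1-u)/((A*(1-v*q))*B)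
      = (s*e*v*q*(1-u)*(1-u^2*v*q^2))/((A*(1-v*q)) * (B*(1-u^2*v*q^2))) := by
    rw [div_eq_div_iff (mul_ne_zero (mul_ne_zero hA h1) hB) hD1]; ring
  rw [e2, e3, e4, ← mul_div_assoc, ← add_div, ← add_div,
    div_eq_div_iff hD1 hD1]
  ring

lemma bp_step {q : ℂ} (hq1 : ‖q‖ < 1) (d r : ℕ) :
    (1 - q^(r+d+1)) * bpT q (r+d+1) r
      = bpT q (r+d) r + (bpG q (r+d) (r+1) - bpG q (r+d) r) := by
  have hdiv : (r+1)*(3*(r+1)+1)/2 = r*(3*r+1)/2 + (3*r+2) := by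
    rw [show (r+1)*(3*(r+1)+1) = r*(3*r+1) + (3*r+2)*2 by ring,
      Nat.add_mul_div_right _ _ (by norm_num : (0:ℕ) < 2)]
  simp only [bpT, bpG, hdiv,
    show r+d+1-r = d+1 by omega, show r+d-r = d by omega,
    show r+d+1-(r+1) = d by omega,
    show r+d+1+r+1 = (r+d+r+1)+1 by omega,
    show r+d+(r+1)+1 = (r+d+r+1)+1 by omega]
  rw [qp_succ q (r+d+r+1), qp_succ q d]
  have hA := qp_ne hq1 d
  have hB := qp_ne hq1 (r+d+r+1)
  have h1 : 1 - q^d*q ≠ 0 := by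
    have := one_sub_pow_ne hq1 d; rwa [pow_succ] at this
  have h2 : 1 - (q^r)^2*q^d*q^2 ≠ 0 := by
    have := one_sub_pow_ne hq1 (r+d+r+1)
    rw [show r+d+r+1+1 = r*2+d+2 by omega] at this
    rwa [show q^(r*2+d+2) = (q^r)^2*q^d*q^2 by rw [pow_add, pow_add, pow_mul]] at this
  have key := bp_key q (qp q q d) (qp q q (r+d+r+1)) (q^(r*(3*r+1)/2)) (q^r) (q^d)
    ((-1)^r) hA hB h1 h2
  linear_combination key

lemma bp_boundary {q : ℂ} (hq1 : ‖q‖ < 1) (L : ℕ) :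
    bpG q L (L+1) + (1 - q^(L+1)) * bpT q (L+1) (L+1) = 0 := by
  simp only [bpT, bpG, Nat.sub_self,
    show L+1-(L+1) = 0 by omega, show L+(L+1)+1 = (L+L+1)+1 by omega,
    show L+1+(L+1)+1 = ((L+L+1)+1)+1 by omega,
    show 2*(L+1)+1 = ((L+L+1)+1)+1 by omega]
  rw [qp_succ q ((L+L+1)+1)]
  have hB := qp_ne hq1 ((L+L+1)+1)
  have hX := one_sub_pow_ne hq1 ((L+L+1)+1)
  have h0 : qp q q 0 = 1 := by simp [qp]
  rw [h0, one_mul, one_mul, mul_div_assoc',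
    show (1 - q^(L+1)) * ((-1)^(L+1) * q^((L+1)*(3*(L+1)+1)/2) * (1 - q^((L+L+1)+1+1)))
      = ((1 - q^(L+1)) * ((-1)^(L+1) * q^((L+1)*(3*(L+1)+1)/2))) * (1 - q^((L+L+1)+1+1)) from by
        ring,
    mul_div_mul_right _ _ hX]
  ring

lemma bp_main {q : ℂ} (hq1 : ‖q‖ < 1) (L : ℕ) :
    ∑ r ∈ Finset.range (L+1), bpT q L r = 1 / qp q q L := by
  induction L with
  | zero =>
    have h1 : (1:ℂ) - q ≠ 0 := by
      have := one_sub_pow_ne hq1 0; rwa [pow_one] at this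
    rw [Finset.sum_range_one]
    simp [bpT, qp, Finset.prod_range_one]
    field_simp
    exact h1
  | succ L ih =>
    have h1 := one_sub_pow_ne hq1 L
    have hPL := qp_ne hq1 L
    have key : (1 - q^(L+1)) * ∑ r ∈ Finset.range (L+2), bpT q (L+1) r
        = 1 / qp q q L := by
      rw [Finset.mul_sum, Finset.sum_range_succ]
      have congr1 : ∀ r ∈ Finset.range (L+1), (1-q^(L+1)) * bpT q (L+1) r
          = bpT q L r + (bpG q L (r+1) - bpG q L r) := by
        intro r hr
        rw [Finset.mem_range] at hr
        obtain ⟨d, rfl⟩ : ∃ d, L = r + d := ⟨L - r, by omega⟩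
        exact bp_step hq1 d r
      rw [Finset.sum_congr rfl congr1, Finset.sum_add_distrib, ih,
        Finset.sum_range_sub (fun r => bpG q L r)]
      have hG0 : bpG q L 0 = 0 := by simp [bpG]
      rw [hG0]
      linear_combination bp_boundary hq1 L
    have key2 : qp q q L * ((1 - q^(L+1)) * ∑ r ∈ Finset.range (L+2), bpT q (L+1) r) = 1 := by
      rw [key, mul_one_div, div_self hPL]
    rw [qp_succ, eq_div_iff (mul_ne_zero hPL h1)]
    linear_combination key2

/-- Rogers' Bailey pair B(3) relative to `a = q`. -/
theorem rogers_bailey_pair_B3 (q : ℂ) (hq0 : 0 < ‖q‖) (hq1 : ‖q‖ < 1) (L : ℕ) :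
    (1 : ℂ) / qp q q L =
      ∑ r ∈ Finset.range (L + 1),
        ((-1) ^ r * q ^ (r * (3 * r + 1) / 2) * (1 - q ^ (2 * r + 1)) / (1 - q)) /
        (qp q q (L - r) * qp q (q ^ 2) (L + r)) := by
  rw [← bp_main hq1 L]
  apply Finset.sum_congr rfl
  intro r _
  simp only [bpT]
  rw [div_div]
  congr 1
  rw [qp_sq q (L+r)]
  ring
end

section
/- Bailey chain (Andrews): If (α, β) is a Bailey pair relative to a, then so is (α', β') where α'_L = ((ρ₁;q)_L (ρ₂;q)_L (aq/(ρ₁ρ₂))^L / ((aq/ρ₁;q)_L (aq/ρ₂;q)_L)) α_L and β'_L = Σ_{r=0}^L (ρ₁;q)_r (ρ₂;q)_r (aq/(ρ₁ρ₂))^r (aq/(ρ₁ρ₂);q)_{L-r} β_r / ((aq/ρ₁;q)_L (aq/ρ₂;q)_L (q;q)_{L-r}). -/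
namespace BaileyChainAux

lemma qp_zero (q x : ℂ) : qp q x 0 = 1 := by simp [qp]

lemma qp_succ (q x : ℂ) (n : ℕ) : qp q x (n + 1) = qp q x n * (1 - x * q ^ n) :=
  Finset.prod_range_succ _ _

lemma qp_factor_ne {q x : ℂ} {n : ℕ} (h : qp q x n ≠ 0) {k : ℕ} (hk : k < n) :
    1 - x * q ^ k ≠ 0 := fun h0 => h (Finset.prod_eq_zero (Finset.mem_range.2 hk) h0)

lemma qq_ne {q : ℂ} (hq1 : ‖q‖ < 1) (n : ℕ) : qp q q n ≠ 0 := by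
  unfold qp
  rw [Finset.prod_ne_zero_iff]
  intro k _ h0
  have h1 : q * q ^ k = 1 := by linear_combination -h0
  have h2 : ‖q * q ^ k‖ < 1 := by
    rw [norm_mul, norm_pow]
    have h3 : ‖q‖ ^ k ≤ 1 := pow_le_one₀ (norm_nonneg q) hq1.le
    nlinarith [norm_nonneg q]
  rw [h1] at h2
  simp at h2

/-- The summand of the inner (q-Saalschütz) sum, `f j n k` with `m = n - k`. -/
noncomputable def fS (q x y a : ℂ) (j m k : ℕ) : ℂ :=
  qp q x (j + k) * qp q y (j + k) * (a * q / (x * y)) ^ (j + k) *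
    qp q (a * q / (x * y)) m /
    (qp q q m * qp q q k * qp q (a * q) (2 * j + k))

/-- The WZ certificate function, `g j n k` with `d = n + 1 - k`. -/
noncomputable def gS (q x y a : ℂ) (j d k n : ℕ) : ℂ :=
  q ^ d * (1 - q ^ k) * (1 - a * q ^ (2 * j + k)) *
    qp q x (j + k) * qp q y (j + k) * (a * q / (x * y)) ^ (j + k) *
    qp q (a * q / (x * y)) d /
    ((1 - q ^ (n + 1)) * (1 - a * q ^ (2 * j + n + 1)) *
      qp q q d * qp q q k * qp q (a * q) (2 * j + k))

/-- Ratio `RHS(j,n+1)/RHS(j,n)`. -/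
noncomputable def rr (q x y a : ℂ) (j n : ℕ) : ℂ :=
  (1 - a * q / x * q ^ (j + n)) * (1 - a * q / y * q ^ (j + n)) /
    ((1 - q ^ (n + 1)) * (1 - a * q ^ (2 * j + n + 1)))

/-- Closed form of the inner sum. -/
noncomputable def rhs (q x y a : ℂ) (j n : ℕ) : ℂ :=
  qp q x j * qp q y j * (a * q / (x * y)) ^ j *
    qp q (a * q / x) (j + n) * qp q (a * q / y) (j + n) /
    (qp q (a * q / x) j * qp q (a * q / y) j * qp q q n * qp q (a * q) (2 * j + n))

set_option maxHeartbeats 4000000 in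
/-- The scalar rational-function identity behind the WZ certificate. -/
lemma scalarS (q x y a u w z : ℂ) (hx : x ≠ 0) (hy : y ≠ 0)
    (h1 : 1 - q * z ≠ 0) (h2 : 1 - q * w ≠ 0) (h3 : 1 - q * (w * z) ≠ 0)
    (h4 : 1 - a * q * (u * u * w) ≠ 0) (h5 : 1 - a * q * (u * u * (w * z)) ≠ 0) :
    (1 - a * q / (x * y) * z) / (1 - q * z)
      = (1 - a * q / x * (u * (w * z))) * (1 - a * q / y * (u * (w * z))) /
          ((1 - q * (w * z)) * (1 - a * q * (u * u * (w * z))))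
        + (q * z * (1 - w) * (1 - a * (u * u * w)) * (1 - a * q / (x * y) * z) /
            ((1 - q * (w * z)) * (1 - a * q * (u * u * (w * z))) * (1 - q * z))
          - z * (1 - q * w) * (1 - a * q * (u * u * w)) * (a * q / (x * y)) *
              (1 - x * (u * w)) * (1 - y * (u * w)) /
              ((1 - q * (w * z)) * (1 - a * q * (u * u * (w * z))) *
                ((1 - q * w) * (1 - a * q * (u * u * w))))) := by
  have hDa : (1 - q * (w * z)) * (1 - a * q * (u * u * (w * z))) ≠ 0 := mul_ne_zero h3 h5
  have hDb : (1 - q * (w * z)) * (1 - a * q * (u * u * (w * z))) * (1 - q * z) ≠ 0 :=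
    mul_ne_zero hDa h1
  have hDc : (1 - q * (w * z)) * (1 - a * q * (u * u * (w * z))) *
      ((1 - q * w) * (1 - a * q * (u * u * w))) ≠ 0 :=
    mul_ne_zero hDa (mul_ne_zero h2 h4)
  rw [div_sub_div _ _ hDb hDc, div_add_div _ _ hDa (mul_ne_zero hDb hDc),
    div_eq_div_iff h1 (mul_ne_zero hDa (mul_ne_zero hDb hDc))]
  field_simp
  ring

set_option maxHeartbeats 4000000 in
/-- The key pointwise WZ identity. -/
lemma keyP (q x y a : ℂ) (hq1 : ‖q‖ < 1) (hx : x ≠ 0) (hy : y ≠ 0)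
    (haq : ∀ n, qp q (a * q) n ≠ 0) (j k m : ℕ) :
    fS q x y a j (m + 1) k
      = rr q x y a j (k + m) * fS q x y a j m k
        + (gS q x y a j (m + 1) k (k + m) - gS q x y a j m (k + 1) (k + m)) := by
  have e1 : qp q x (j + (k + 1)) = qp q x (j + k) * (1 - x * q ^ (j + k)) := by
    rw [show j + (k + 1) = (j + k) + 1 by omega, qp_succ]
  have e2 : qp q y (j + (k + 1)) = qp q y (j + k) * (1 - y * q ^ (j + k)) := by
    rw [show j + (k + 1) = (j + k) + 1 by omega, qp_succ]
  have e3 : qp q (a * q) (2 * j + (k + 1)) =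
      qp q (a * q) (2 * j + k) * (1 - a * q * q ^ (2 * j + k)) := by
    rw [show 2 * j + (k + 1) = (2 * j + k) + 1 by omega, qp_succ]
  have h1 : 1 - q * q ^ m ≠ 0 := qp_factor_ne (qq_ne hq1 (m + 1)) (Nat.lt_succ_self m)
  have h2 : 1 - q * q ^ k ≠ 0 := qp_factor_ne (qq_ne hq1 (k + 1)) (Nat.lt_succ_self k)
  have h3 : 1 - q * (q ^ k * q ^ m) ≠ 0 := by
    rw [← pow_add]
    exact qp_factor_ne (qq_ne hq1 (k + m + 1)) (Nat.lt_succ_self (k + m))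
  have h4 : 1 - a * q * (q ^ j * q ^ j * q ^ k) ≠ 0 := by
    rw [show q ^ j * q ^ j * q ^ k = q ^ (2 * j + k) by rw [pow_add, two_mul, pow_add]]
    exact qp_factor_ne (haq (2 * j + k + 1)) (Nat.lt_succ_self (2 * j + k))
  have h5 : 1 - a * q * (q ^ j * q ^ j * (q ^ k * q ^ m)) ≠ 0 := by
    rw [show q ^ j * q ^ j * (q ^ k * q ^ m) = q ^ (2 * j + (k + m)) by
      rw [pow_add, two_mul, pow_add, pow_add]]
    exact qp_factor_ne (haq (2 * j + (k + m) + 1)) (Nat.lt_succ_self (2 * j + (k + m)))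
  have hpow4 : (a * q / (x * y)) ^ (j + (k + 1)) =
      (a * q / (x * y)) ^ (j + k) * (a * q / (x * y)) := by
    rw [show j + (k + 1) = (j + k) + 1 by omega, pow_succ]
  unfold fS gS rr
  rw [qp_succ q q m, qp_succ q q k, qp_succ q (a * q / (x * y)) m, e1, e2, e3, hpow4,
    show (1 : ℂ) - q ^ (k + m + 1) = 1 - q * (q ^ k * q ^ m) by
      rw [pow_add, pow_add]; ring,
    show (1 : ℂ) - a * q ^ (2 * j + (k + m) + 1)
        = 1 - a * q * (q ^ j * q ^ j * (q ^ k * q ^ m)) by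
      rw [pow_add, pow_add, pow_add, two_mul, pow_add]; ring,
    show (1 : ℂ) - a * q ^ (2 * j + (k + 1)) = 1 - a * q * (q ^ j * q ^ j * q ^ k) by
      rw [pow_add, pow_add, two_mul, pow_add]; ring,
    show (1 : ℂ) - q ^ (k + 1) = 1 - q * q ^ k by rw [pow_add]; ring]
  have h4' : 1 - a * q * q ^ (2 * j + k) ≠ 0 :=
    qp_factor_ne (haq (2 * j + k + 1)) (Nat.lt_succ_self (2 * j + k))
  have hQm := qq_ne hq1 m
  have hQk := qq_ne hq1 k
  have hAQ := haq (2 * j + k)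
  have hE : (1 - q * (q ^ k * q ^ m)) * (1 - a * q * (q ^ j * q ^ j * (q ^ k * q ^ m))) ≠ 0 :=
    mul_ne_zero h3 h5
  have hD1 : qp q q m * (1 - q * q ^ m) * qp q q k * qp q (a * q) (2 * j + k) ≠ 0 :=
    mul_ne_zero (mul_ne_zero (mul_ne_zero hQm h1) hQk) hAQ
  have hDf : qp q q m * qp q q k * qp q (a * q) (2 * j + k) ≠ 0 :=
    mul_ne_zero (mul_ne_zero hQm hQk) hAQ
  have hD3 : (1 - q * (q ^ k * q ^ m)) * (1 - a * q * (q ^ j * q ^ j * (q ^ k * q ^ m))) *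
      (qp q q m * (1 - q * q ^ m)) * qp q q k * qp q (a * q) (2 * j + k) ≠ 0 :=
    mul_ne_zero (mul_ne_zero (mul_ne_zero hE (mul_ne_zero hQm h1)) hQk) hAQ
  have hD4 : (1 - q * (q ^ k * q ^ m)) * (1 - a * q * (q ^ j * q ^ j * (q ^ k * q ^ m))) *
      qp q q m * (qp q q k * (1 - q * q ^ k)) *
      (qp q (a * q) (2 * j + k) * (1 - a * q * q ^ (2 * j + k))) ≠ 0 :=
    mul_ne_zero (mul_ne_zero (mul_ne_zero hE hQm) (mul_ne_zero hQk h2))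
      (mul_ne_zero hAQ h4')
  rw [div_mul_div_comm, div_sub_div _ _ hD3 hD4, div_add_div _ _ (mul_ne_zero hE hDf)
    (mul_ne_zero hD3 hD4), div_eq_div_iff hD1 (mul_ne_zero (mul_ne_zero hE hDf)
    (mul_ne_zero hD3 hD4))]
  field_simp
  ring


lemma gS_zero (q x y a : ℂ) (j d n : ℕ) : gS q x y a j d 0 n = 0 := by
  simp [gS]

lemma gS_last (q x y a : ℂ) (hq1 : ‖q‖ < 1) (haq : ∀ n, qp q (a * q) n ≠ 0)
    (j n : ℕ) :
    gS q x y a j 0 (n + 1) n = fS q x y a j 0 (n + 1) := by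
  unfold gS fS
  have hA : 1 - a * q ^ (2 * j + n + 1) ≠ 0 := by
    rw [show (1 : ℂ) - a * q ^ (2 * j + n + 1) = 1 - a * q * q ^ (2 * j + n) by
      rw [pow_add, pow_add]; ring]
    exact qp_factor_ne (haq (2 * j + n + 1)) (Nat.lt_succ_self (2 * j + n))
  have hQ : 1 - q ^ (n + 1) ≠ 0 := by
    rw [show (1 : ℂ) - q ^ (n + 1) = 1 - q * q ^ n by rw [pow_succ]; ring]
    exact qp_factor_ne (qq_ne hq1 (n + 1)) (Nat.lt_succ_self n)
  have hqq := qq_ne hq1 (n + 1)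
  have hq0 := qq_ne hq1 0
  have hAQ := haq (2 * j + (n + 1))
  rw [div_eq_div_iff (mul_ne_zero (mul_ne_zero (mul_ne_zero (mul_ne_zero hQ hA) hq0) hqq) hAQ)
    (mul_ne_zero (mul_ne_zero hq0 hqq) hAQ)]
  rw [show (1 : ℂ) - a * q ^ (2 * j + (n + 1)) = 1 - a * q ^ (2 * j + n + 1) by
    rw [← Nat.add_assoc]]
  ring

/-- `rhs` satisfies the first-order recurrence with ratio `rr`. -/
lemma rhs_succ (q x y a : ℂ) (hq1 : ‖q‖ < 1) (hx : x ≠ 0) (hy : y ≠ 0)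
    (hd1 : ∀ n, qp q (a * q / x) n ≠ 0) (hd2 : ∀ n, qp q (a * q / y) n ≠ 0)
    (haq : ∀ n, qp q (a * q) n ≠ 0) (j n : ℕ) :
    rhs q x y a j (n + 1) = rr q x y a j n * rhs q x y a j n := by
  unfold rhs rr
  have e1 : qp q (a * q / x) (j + (n + 1)) =
      qp q (a * q / x) (j + n) * (1 - a * q / x * q ^ (j + n)) := by
    rw [show j + (n + 1) = (j + n) + 1 by omega, qp_succ]
  have e2 : qp q (a * q / y) (j + (n + 1)) =
      qp q (a * q / y) (j + n) * (1 - a * q / y * q ^ (j + n)) := by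
    rw [show j + (n + 1) = (j + n) + 1 by omega, qp_succ]
  have e3 : qp q (a * q) (2 * j + (n + 1)) =
      qp q (a * q) (2 * j + n) * (1 - a * q * q ^ (2 * j + n)) := by
    rw [show 2 * j + (n + 1) = (2 * j + n) + 1 by omega, qp_succ]
  have h1 : 1 - q * q ^ n ≠ 0 := qp_factor_ne (qq_ne hq1 (n + 1)) (Nat.lt_succ_self n)
  have h2 : 1 - a * q * q ^ (2 * j + n) ≠ 0 :=
    qp_factor_ne (haq (2 * j + n + 1)) (Nat.lt_succ_self (2 * j + n))
  have hD1 : qp q (a * q / x) j * qp q (a * q / y) j * (qp q q n * (1 - q * q ^ n)) *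
      (qp q (a * q) (2 * j + n) * (1 - a * q * q ^ (2 * j + n))) ≠ 0 :=
    mul_ne_zero (mul_ne_zero (mul_ne_zero (hd1 j) (hd2 j))
      (mul_ne_zero (qq_ne hq1 n) h1)) (mul_ne_zero (haq (2 * j + n)) h2)
  have hD2 : (1 - q * q ^ n) * (1 - a * q * q ^ (2 * j + n)) *
      (qp q (a * q / x) j * qp q (a * q / y) j * qp q q n * qp q (a * q) (2 * j + n)) ≠ 0 :=
    mul_ne_zero (mul_ne_zero h1 h2)
      (mul_ne_zero (mul_ne_zero (mul_ne_zero (hd1 j) (hd2 j)) (qq_ne hq1 n))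
        (haq (2 * j + n)))
  rw [e1, e2, e3, qp_succ q q n,
    show (1 : ℂ) - q ^ (n + 1) = 1 - q * q ^ n by rw [pow_succ]; ring,
    show (1 : ℂ) - a * q ^ (2 * j + n + 1) = 1 - a * q * q ^ (2 * j + n) by
      rw [pow_add, pow_add]; ring]
  rw [div_mul_div_comm, div_eq_div_iff hD1 hD2]
  ring

/-- q-Saalschütz: closed form for the inner sum. -/
lemma qSaal (q x y a : ℂ) (hq1 : ‖q‖ < 1) (hx : x ≠ 0) (hy : y ≠ 0)
    (hd1 : ∀ n, qp q (a * q / x) n ≠ 0) (hd2 : ∀ n, qp q (a * q / y) n ≠ 0)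
    (haq : ∀ n, qp q (a * q) n ≠ 0) :
    ∀ n j, (∑ k ∈ Finset.range (n + 1), fS q x y a j (n - k) k) = rhs q x y a j n := by
  intro n
  induction n with
  | zero =>
      intro j
      rw [Finset.sum_range_one]
      unfold fS rhs
      simp only [Nat.sub_self, Nat.add_zero, qp_zero]
      rw [div_eq_div_iff (by simp only [one_mul]; exact haq (2 * j))
        (by simp only [mul_one]
            exact mul_ne_zero (mul_ne_zero (hd1 j) (hd2 j)) (haq (2 * j)))]
      ring
  | succ n ih =>
      intro j
      rw [Finset.sum_range_succ]
      have hpt : ∀ k ∈ Finset.range (n + 1),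
          fS q x y a j (n + 1 - k) k
            = rr q x y a j n * fS q x y a j (n - k) k
              + (gS q x y a j (n + 1 - k) k n - gS q x y a j (n + 1 - (k + 1)) (k + 1) n) := by
        intro k hk
        have hkn : k ≤ n := Nat.lt_succ_iff.mp (Finset.mem_range.mp hk)
        obtain ⟨m, rfl⟩ : ∃ m, n = k + m := ⟨n - k, by omega⟩
        rw [show k + m + 1 - k = m + 1 by omega, show k + m - k = m by omega,
          show k + m + 1 - (k + 1) = m by omega]
        exact keyP q x y a hq1 hx hy haq j k m
      rw [Finset.sum_congr rfl hpt, Finset.sum_add_distrib, ← Finset.mul_sum,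
        Finset.sum_range_sub' (fun i => gS q x y a j (n + 1 - i) i n) (n + 1)]
      simp only [Nat.sub_self, Nat.sub_zero]
      rw [ih j, gS_zero, gS_last q x y a hq1 haq j n,
        rhs_succ q x y a hq1 hx hy hd1 hd2 haq j n]
      ring

end BaileyChainAux

/-- the Bailey chain (Andrews). If `(α,β)` is a Bailey pair relative to `a`,
then so is `(α',β')`. -/
theorem bailey_chain (q a ρ₁ ρ₂ : ℂ) (hq0 : 0 < ‖q‖) (hq1 : ‖q‖ < 1)
    (ha : a ≠ 0) (hρ₁ : ρ₁ ≠ 0) (hρ₂ : ρ₂ ≠ 0)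
    (hd₁ : ∀ n, qp q (a * q / ρ₁) n ≠ 0) (hd₂ : ∀ n, qp q (a * q / ρ₂) n ≠ 0)
    (haq : ∀ n, qp q (a * q) n ≠ 0)
    (α β : ℕ → ℂ)
    (hBP : ∀ L, β L = ∑ r ∈ Finset.range (L + 1),
      α r / (qp q q (L - r) * qp q (a * q) (L + r))) :
    ∀ L, (∑ r ∈ Finset.range (L + 1),
        qp q ρ₁ r * qp q ρ₂ r * (a * q / (ρ₁ * ρ₂)) ^ r *
          qp q (a * q / (ρ₁ * ρ₂)) (L - r) * β r /
          (qp q (a * q / ρ₁) L * qp q (a * q / ρ₂) L * qp q q (L - r))) =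
      ∑ r ∈ Finset.range (L + 1),
        (qp q ρ₁ r * qp q ρ₂ r * (a * q / (ρ₁ * ρ₂)) ^ r /
            (qp q (a * q / ρ₁) r * qp q (a * q / ρ₂) r) * α r) /
          (qp q q (L - r) * qp q (a * q) (L + r)) := by
  intro L
  classical
  have step1 : ∀ r ∈ Finset.range (L + 1),
      qp q ρ₁ r * qp q ρ₂ r * (a * q / (ρ₁ * ρ₂)) ^ r *
          qp q (a * q / (ρ₁ * ρ₂)) (L - r) * β r /
          (qp q (a * q / ρ₁) L * qp q (a * q / ρ₂) L * qp q q (L - r))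
        = ∑ i ∈ Finset.range (r + 1),
            qp q ρ₁ r * qp q ρ₂ r * (a * q / (ρ₁ * ρ₂)) ^ r *
              qp q (a * q / (ρ₁ * ρ₂)) (L - r) *
              (α i / (qp q q (r - i) * qp q (a * q) (r + i))) /
              (qp q (a * q / ρ₁) L * qp q (a * q / ρ₂) L * qp q q (L - r)) := by
    intro r _
    rw [hBP r, Finset.mul_sum, Finset.sum_div]
  rw [Finset.sum_congr rfl step1]
  have swap := Finset.sum_Ico_Ico_comm 0 (L + 1) (fun i r =>
    qp q ρ₁ r * qp q ρ₂ r * (a * q / (ρ₁ * ρ₂)) ^ r *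
      qp q (a * q / (ρ₁ * ρ₂)) (L - r) *
      (α i / (qp q q (r - i) * qp q (a * q) (r + i))) /
      (qp q (a * q / ρ₁) L * qp q (a * q / ρ₂) L * qp q q (L - r)))
  simp only [Nat.Ico_zero_eq_range] at swap
  rw [← swap]
  refine Finset.sum_congr rfl ?_
  intro i hi
  have hiL : i ≤ L := Nat.lt_succ_iff.mp (Finset.mem_range.mp hi)
  rw [Finset.sum_Ico_eq_sum_range]
  have step3 : ∀ k ∈ Finset.range (L + 1 - i),
      qp q ρ₁ (i + k) * qp q ρ₂ (i + k) * (a * q / (ρ₁ * ρ₂)) ^ (i + k) *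
        qp q (a * q / (ρ₁ * ρ₂)) (L - (i + k)) *
        (α i / (qp q q (i + k - i) * qp q (a * q) (i + k + i))) /
        (qp q (a * q / ρ₁) L * qp q (a * q / ρ₂) L * qp q q (L - (i + k)))
      = BaileyChainAux.fS q ρ₁ ρ₂ a i (L - i - k) k * α i /
          (qp q (a * q / ρ₁) L * qp q (a * q / ρ₂) L) := by
    intro k _
    rw [show i + k - i = k by omega, show i + k + i = 2 * i + k by omega,
      show L - (i + k) = L - i - k by omega]
    unfold BaileyChainAux.fS
    ring
  rw [Finset.sum_congr rfl step3, ← Finset.sum_div, ← Finset.sum_mul,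
    show L + 1 - i = (L - i) + 1 by omega,
    BaileyChainAux.qSaal q ρ₁ ρ₂ a hq1 hρ₁ hρ₂ hd₁ hd₂ haq (L - i) i]
  unfold BaileyChainAux.rhs
  rw [show i + (L - i) = L by omega, show 2 * i + (L - i) = L + i by omega]
  have hA : qp q (a * q / ρ₁) i * qp q (a * q / ρ₂) i * qp q q (L - i) *
      qp q (a * q) (L + i) * (qp q (a * q / ρ₁) L * qp q (a * q / ρ₂) L) ≠ 0 :=
    mul_ne_zero (mul_ne_zero (mul_ne_zero (mul_ne_zero (hd₁ i) (hd₂ i))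
      (BaileyChainAux.qq_ne hq1 (L - i))) (haq (L + i)))
      (mul_ne_zero (hd₁ L) (hd₂ L))
  have hB : qp q (a * q / ρ₁) i * qp q (a * q / ρ₂) i *
      (qp q q (L - i) * qp q (a * q) (L + i)) ≠ 0 :=
    mul_ne_zero (mul_ne_zero (hd₁ i) (hd₂ i))
      (mul_ne_zero (BaileyChainAux.qq_ne hq1 (L - i)) (haq (L + i)))
  rw [div_mul_eq_mul_div, div_mul_eq_mul_div, div_div, div_div, div_eq_div_iff hA hB]
  ring
end

section
/- For coprime integers 1 ≤ p < p', integers 1 ≤ b, s ≤ p'-1, 0 ≤ r ≤ p-1, and L ≥ 0 with L+s+b even, the configuration sum satisfies the symmetry X_{r,s}^{(p,p')}(L,b;q) = q^{(L² - (b-s)²)/4} X_{b-r,s}^{(p'-p,p')}(L,b;1/q), where X_{r,s}^{(p,p')}(L,b;q) = Σ_{j∈ℤ} [ q^{j(pp'j + p'r - ps)} C(L, (L+s-b)/2 - p'j)_q - q^{(pj+r)(p'j+s)} C(L, (L-s-b)/2 - p'j)_q ]. -/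
/-- Gaussian binomial coefficient `C(n,k)_q = (q^{n-k+1};q)_k / (q;q)_k` for `0 ≤ k ≤ n`,
and `0` otherwise. -/
noncomputable def gbin (q : ℂ) (n : ℕ) (k : ℤ) : ℂ :=
  if 0 ≤ k ∧ k ≤ (n : ℤ) then qp q (q ^ (n + 1 - k.toNat)) k.toNat / qp q q k.toNat else 0

/-- One-dimensional configuration sums `X_{r,s}^{(p,p')}(L,b;q)` of the ABF model. -/
noncomputable def X (q : ℂ) (p p' : ℕ) (r : ℤ) (s b L : ℕ) : ℂ :=
  ∑' j : ℤ,
    (q ^ (j * ((p : ℤ) * p' * j + (p' : ℤ) * r - (p : ℤ) * s)) *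
        gbin q L (((L : ℤ) + s - b) / 2 - (p' : ℤ) * j) -
      q ^ (((p : ℤ) * j + r) * ((p' : ℤ) * j + s)) *
        gbin q L (((L : ℤ) - s - b) / 2 - (p' : ℤ) * j))

lemma qp_inv_prod (q : ℂ) (hq : q ≠ 0) (a m : ℕ) :
    qp q⁻¹ (q⁻¹ ^ a) m = (∏ i ∈ Finset.range m, (-(q ^ (a + i))⁻¹)) * qp q (q ^ a) m := by
  unfold qp
  rw [← Finset.prod_mul_distrib]
  refine Finset.prod_congr rfl fun i _ => ?_
  have hqa : q ^ (a + i) ≠ 0 := pow_ne_zero _ hq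
  rw [pow_add]
  field_simp
  try ring
  have key : q ^ a * q ^ i * q⁻¹ ^ a * q⁻¹ ^ i = 1 := by
    rw [inv_pow, inv_pow]; field_simp
  linear_combination (-1 : ℂ) * key

lemma gbin_inv (q : ℂ) (hq : q ≠ 0) (n : ℕ) (k : ℤ) :
    gbin q⁻¹ n k = q ^ (-(k * ((n : ℤ) - k))) * gbin q n k := by
  unfold gbin
  by_cases h : 0 ≤ k ∧ k ≤ (n : ℤ)
  · rw [if_pos h, if_pos h]
    set m := k.toNat with hm
    have hk : k = (m : ℤ) := (Int.toNat_of_nonneg h.1).symm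
    have hmn : m ≤ n := by omega
    have h1 := qp_inv_prod q hq (n + 1 - m) m
    have h2 : qp q⁻¹ q⁻¹ m = (∏ i ∈ Finset.range m, (-(q ^ (1 + i))⁻¹)) * qp q q m := by
      simpa using qp_inv_prod q hq 1 m
    have h4 : (∏ i ∈ Finset.range m, (-(q ^ ((n + 1 - m) + i))⁻¹)) =
        ((q ^ (n - m))⁻¹) ^ m * ∏ i ∈ Finset.range m, (-(q ^ (1 + i))⁻¹) := by
      have hc : ((q ^ (n - m))⁻¹) ^ m = ∏ _i ∈ Finset.range m, (q ^ (n - m))⁻¹ := by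
        rw [Finset.prod_const, Finset.card_range]
      rw [hc, ← Finset.prod_mul_distrib]
      refine Finset.prod_congr rfl fun i _ => ?_
      have he : (n + 1 - m) + i = (n - m) + (1 + i) := by omega
      rw [he, pow_add, mul_inv]
      ring
    have hP : (∏ i ∈ Finset.range m, (-(q ^ (1 + i))⁻¹)) ≠ 0 :=
      Finset.prod_ne_zero_iff.mpr fun i _ => by
        simp [pow_ne_zero, hq]
    have hzpow : q ^ (-(k * ((n : ℤ) - k))) = ((q ^ (n - m))⁻¹) ^ m := by
      have hcast : k * ((n : ℤ) - k) = ((m * (n - m) : ℕ) : ℤ) := by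
        rw [hk]; push_cast [Nat.cast_sub hmn]; ring
      rw [hcast, zpow_neg, zpow_natCast, inv_pow, ← pow_mul, Nat.mul_comm]
    rw [h1, h2, h4, hzpow]
    have hre : ((q ^ (n - m))⁻¹) ^ m * (∏ i ∈ Finset.range m, (-(q ^ (1 + i))⁻¹)) *
        qp q (q ^ (n + 1 - m)) m =
        (∏ i ∈ Finset.range m, (-(q ^ (1 + i))⁻¹)) *
          (((q ^ (n - m))⁻¹) ^ m * qp q (q ^ (n + 1 - m)) m) := by ring
    rw [hre, mul_div_mul_left _ _ hP, mul_div_assoc]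
  · rw [if_neg h, if_neg h, mul_zero]

lemma zhelp (q : ℂ) (hq : q ≠ 0) (E f g : ℤ) (G : ℂ) :
    q ^ E * (q⁻¹ ^ f * (q ^ (-g) * G)) = q ^ (E - f - g) * G := by
  rw [inv_zpow, ← zpow_neg, ← mul_assoc, ← mul_assoc, ← zpow_add₀ hq, ← zpow_add₀ hq]
  have hx : E + -f + -g = E - f - g := by ring
  rw [hx]

/-- the duality symmetry
`X_{r,s}^{(p,p')}(L,b;q) = q^{(L²-(b-s)²)/4} X_{b-r,s}^{(p'-p,p')}(L,b;1/q)`. -/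
theorem configuration_sum_symmetry (q : ℂ) (hq : q ≠ 0)
    (hroot : ∀ n : ℕ, 0 < n → q ^ n ≠ 1)
    (p p' r s b L : ℕ) (hp : 1 ≤ p) (hpp' : p < p') (hcop : Nat.Coprime p p')
    (hb1 : 1 ≤ b) (hb2 : b ≤ p' - 1) (hs1 : 1 ≤ s) (hs2 : s ≤ p' - 1)
    (hr : r ≤ p - 1) (hpar : (L + s + b) % 2 = 0) :
    X q p p' (r : ℤ) s b L =
      q ^ (((L : ℤ) ^ 2 - ((b : ℤ) - s) ^ 2) / 4) * X q⁻¹ (p' - p) p' ((b : ℤ) - r) s b L := by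
  simp only [X]
  rw [← tsum_mul_left]
  refine tsum_congr fun j => ?_
  generalize hA : ((L : ℤ) + (s : ℤ) - (b : ℤ)) / 2 = A
  generalize hB : ((L : ℤ) - (s : ℤ) - (b : ℤ)) / 2 = B
  have h2A : 2 * A = (L : ℤ) + s - b := by omega
  have h2B : 2 * B = (L : ℤ) - s - b := by omega
  have hE : ((L : ℤ) ^ 2 - ((b : ℤ) - s) ^ 2) / 4 = A * ((L : ℤ) - A) := by
    have h4 : (L : ℤ) ^ 2 - ((b : ℤ) - s) ^ 2 = 4 * (A * ((L : ℤ) - A)) := by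
      linear_combination (2 * A - (L : ℤ) + s - b) * h2A
    rw [h4]
    exact Int.mul_ediv_cancel_left _ (by norm_num)
  rw [hE, gbin_inv q hq L (A - (p' : ℤ) * j), gbin_inv q hq L (B - (p' : ℤ) * j),
    Nat.cast_sub hpp'.le,
    mul_sub (q ^ (A * ((L : ℤ) - A))), zhelp q hq, zhelp q hq]
  have hLrw : (L : ℤ) = A + B + b := by omega
  have hsrw : (s : ℤ) = A - B := by omega
  congr 1
  · congr 2
    rw [hLrw, hsrw]
    ring
  · congr 2
    rw [hLrw, hsrw]
    ring
end
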